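/- Every compact convex set K ⊂ ℝⁿ that is not a singleton (and is nonempty) equals the closed convex hull of the set of its antipodally exposed points. -/
import Mathlib


open scoped RealInnerProductSpace

/-- A point `x` of `K` is *antipodally exposed* provided there exist distinct parallel
hyperplanes `{y : ⟪g, y⟫ = α}` and `{y : ⟪g, y⟫ = β}` (with `g ≠ 0`, `α ≠ β`), both
supporting `K`, which meet `K` exactly in `{x}` and in a singleton `{z}`, respectively. -/
def AntipodallyExposedPoints {n : ℕ} (K : Set (EuclideanSpace ℝ (Fin n))) :
    Set (EuclideanSpace ℝ (Fin n)) :=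
  {x | ∃ (z g : EuclideanSpace ℝ (Fin n)) (α β : ℝ), g ≠ 0 ∧ α ≠ β ∧
    (∀ y ∈ K, β ≤ ⟪g, y⟫ ∧ ⟪g, y⟫ ≤ α) ∧
    {y ∈ K | ⟪g, y⟫ = α} = {x} ∧ {y ∈ K | ⟪g, y⟫ = β} = {z}}

/-- Variational lemma: maximizing `⟪p.1-p.2,p.1-p.2⟫ + ⟪g, p.1-p.2⟫` over `K × K`
produces an antipodally exposed point `x` that nearly maximizes `⟪g, ·⟫` on `K`. -/
lemma real_inner_self_pos' {n : ℕ} {v : EuclideanSpace ℝ (Fin n)} (h : v ≠ 0) :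
    (0:ℝ) < ⟪v, v⟫ :=
  lt_of_not_ge fun hl => h (real_inner_self_nonpos.mp hl)

lemma exists_antipodal_max {n : ℕ} (K : Set (EuclideanSpace ℝ (Fin n)))
    (hne : K.Nonempty) (hc : IsCompact K) (hns : ∀ x, K ≠ {x})
    (g : EuclideanSpace ℝ (Fin n)) :
    ∃ x z, x ∈ AntipodallyExposedPoints K ∧ x ∈ K ∧ z ∈ K ∧
      ∀ u ∈ K, ⟪g, u⟫ ≤ ⟪g, x⟫ + ⟪x - z, x - z⟫ := by
  classical
  obtain ⟨a, ha⟩ := hne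
  obtain ⟨b, hb, hba⟩ : ∃ b ∈ K, b ≠ a := by
    by_contra h
    push_neg at h
    exact hns a (Set.eq_singleton_iff_unique_mem.mpr ⟨ha, h⟩)
  set f : (EuclideanSpace ℝ (Fin n)) × (EuclideanSpace ℝ (Fin n)) → ℝ :=
    fun p => ⟪p.1 - p.2, p.1 - p.2⟫ + ⟪g, p.1 - p.2⟫ with hfdef
  have hfc : Continuous f := by
    have hsub : Continuous fun p : (EuclideanSpace ℝ (Fin n)) × (EuclideanSpace ℝ (Fin n)) =>
        p.1 - p.2 := continuous_fst.sub continuous_snd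
    exact (hsub.inner hsub).add (continuous_const.inner hsub)
  obtain ⟨⟨x, z⟩, hxzK, hmax0⟩ :=
    (hc.prod hc).exists_isMaxOn ⟨(a, b), Set.mk_mem_prod ha hb⟩ hfc.continuousOn
  have hxK : x ∈ K := hxzK.1
  have hzK : z ∈ K := hxzK.2
  have hmax : ∀ p ∈ K ×ˢ K, f p ≤ f (x, z) := fun p hp => isMaxOn_iff.mp hmax0 p hp
  have hab : (0:ℝ) < ⟪a - b, a - b⟫ := real_inner_self_pos' (sub_ne_zero.mpr hba.symm)
  have h1 : f (a, b) ≤ f (x, z) := hmax _ (Set.mk_mem_prod ha hb)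
  have h2 : f (b, a) ≤ f (x, z) := hmax _ (Set.mk_mem_prod hb ha)
  have hsum : f (a, b) + f (b, a) = 2 * ⟪a - b, a - b⟫ := by
    simp only [hfdef]
    have e1 : b - a = -(a - b) := by abel
    rw [e1, inner_neg_neg, inner_neg_right]
    ring
  have hpos : 0 < f (x, z) := by linarith
  set w : EuclideanSpace ℝ (Fin n) := (2:ℝ) • (x - z) + g with hwdef
  have hwd : ∀ v, ⟪w, v⟫ = 2 * ⟪x - z, v⟫ + ⟪g, v⟫ := by
    intro v
    rw [hwdef, inner_add_left, real_inner_smul_left]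
  have key_upper : ∀ y ∈ K, ⟪w, y⟫ + ⟪y - x, y - x⟫ ≤ ⟪w, x⟫ := by
    intro y hy
    have h := hmax _ (Set.mk_mem_prod hy hzK)
    simp only [hfdef] at h
    have hyz : y - z = (y - x) + (x - z) := by abel
    have hexp : ⟪y - z, y - z⟫ = ⟪y - x, y - x⟫ + 2 * ⟪y - x, x - z⟫ + ⟪x - z, x - z⟫ := by
      rw [hyz, real_inner_add_add_self]
    have hg1 : ⟪g, y - z⟫ = ⟪g, y - x⟫ + ⟪g, x - z⟫ := by rw [hyz, inner_add_right]
    have hwyx : ⟪w, y⟫ - ⟪w, x⟫ = 2 * ⟪y - x, x - z⟫ + ⟪g, y - x⟫ := by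
      rw [← inner_sub_right, hwd (y - x), real_inner_comm (x - z) (y - x)]
    linarith
  have key_lower : ∀ y ∈ K, ⟪w, z⟫ + ⟪z - y, z - y⟫ ≤ ⟪w, y⟫ := by
    intro y hy
    have h := hmax _ (Set.mk_mem_prod hxK hy)
    simp only [hfdef] at h
    have hxy : x - y = (x - z) + (z - y) := by abel
    have hexp : ⟪x - y, x - y⟫ = ⟪x - z, x - z⟫ + 2 * ⟪x - z, z - y⟫ + ⟪z - y, z - y⟫ := by
      rw [hxy, real_inner_add_add_self]
    have hg1 : ⟪g, x - y⟫ = ⟪g, x - z⟫ + ⟪g, z - y⟫ := by rw [hxy, inner_add_right]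
    have hwzy : ⟪w, z⟫ - ⟪w, y⟫ = 2 * ⟪x - z, z - y⟫ + ⟪g, z - y⟫ := by
      rw [← inner_sub_right, hwd (z - y)]
    linarith
  have hfxz : f (x, z) = ⟪x - z, x - z⟫ + ⟪g, x - z⟫ := by simp only [hfdef]
  have hαβ : ⟪w, z⟫ < ⟪w, x⟫ := by
    have hd : ⟪w, x⟫ - ⟪w, z⟫ = 2 * ⟪x - z, x - z⟫ + ⟪g, x - z⟫ := by
      rw [← inner_sub_right, hwd]
    have hd0 : (0:ℝ) ≤ ⟪x - z, x - z⟫ := real_inner_self_nonneg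
    linarith
  have hw0 : w ≠ 0 := by
    intro h
    rw [h] at hαβ
    simp at hαβ
  have hSx : {y ∈ K | ⟪w, y⟫ = ⟪w, x⟫} = {x} := by
    ext y
    simp only [Set.mem_setOf_eq, Set.mem_singleton_iff]
    constructor
    · rintro ⟨hyK, hye⟩
      have hk := key_upper y hyK
      have h0 : ⟪y - x, y - x⟫ ≤ 0 := by linarith
      have hz0 : y - x = 0 := real_inner_self_nonpos.mp h0
      exact sub_eq_zero.mp hz0
    · rintro rfl; exact ⟨hxK, rfl⟩
  have hSz : {y ∈ K | ⟪w, y⟫ = ⟪w, z⟫} = {z} := by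
    ext y
    simp only [Set.mem_setOf_eq, Set.mem_singleton_iff]
    constructor
    · rintro ⟨hyK, hye⟩
      have hk := key_lower y hyK
      have h0 : ⟪z - y, z - y⟫ ≤ 0 := by linarith
      have hz0 : z - y = 0 := real_inner_self_nonpos.mp h0
      exact (sub_eq_zero.mp hz0).symm
    · rintro rfl; exact ⟨hzK, rfl⟩
  refine ⟨x, z, ⟨z, w, ⟪w, x⟫, ⟪w, z⟫, hw0, hαβ.ne', ?_, hSx, hSz⟩, hxK, hzK, ?_⟩
  · intro y hy
    have hu := key_upper y hy
    have hl := key_lower y hy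
    have h1 : (0:ℝ) ≤ ⟪y - x, y - x⟫ := real_inner_self_nonneg
    have h2 : (0:ℝ) ≤ ⟪z - y, z - y⟫ := real_inner_self_nonneg
    exact ⟨by linarith, by linarith⟩
  · intro u hu
    have h := hmax _ (Set.mk_mem_prod hu hzK)
    simp only [hfdef] at h
    have h1 : ⟪g, u - z⟫ = ⟪g, u⟫ - ⟪g, z⟫ := inner_sub_right _ _ _
    have h2 : ⟪g, x - z⟫ = ⟪g, x⟫ - ⟪g, z⟫ := inner_sub_right _ _ _
    have h3 : (0:ℝ) ≤ ⟪u - z, u - z⟫ := real_inner_self_nonneg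
    linarith

/-- Any compact convex set `K ⊆ ℝⁿ` distinct from a singleton is the closed convex hull
of its antipodally exposed points. -/
theorem eq_closure_convexHull_antipodallyExposedPoints
    (n : ℕ) (K : Set (EuclideanSpace ℝ (Fin n)))
    (hne : K.Nonempty) (hc : IsCompact K) (hcv : Convex ℝ K)
    (hns : ∀ x, K ≠ {x}) :
    K = closure (convexHull ℝ (AntipodallyExposedPoints K)) := by
  have hAK : AntipodallyExposedPoints K ⊆ K := by
    rintro x ⟨z, g, α, β, hg, hab, hsupp, hx, hz⟩
    have hx' : x ∈ {y ∈ K | ⟪g, y⟫ = α} := by rw [hx]; rfl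
    exact hx'.1
  apply Set.Subset.antisymm _ (closure_minimal (convexHull_min hAK hcv) hc.isClosed)
  intro u hu
  by_contra hC
  obtain ⟨f, s, hfs, hsu⟩ := geometric_hahn_banach_closed_point
    ((convex_convexHull ℝ _).closure) isClosed_closure hC
  set g0 := (InnerProductSpace.toDual ℝ (EuclideanSpace ℝ (Fin n))).symm f with hg0def
  have hg0a : ∀ y, ⟪g0, y⟫ = f y := fun y => by
    rw [hg0def]; exact InnerProductSpace.toDual_symm_apply
  obtain ⟨Cb, hCb⟩ := Metric.isBounded_iff.mp hc.isBounded
  set D := max Cb 0 ^ 2 with hD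
  have hD0 : (0:ℝ) ≤ D := sq_nonneg _
  have hεpos : 0 < f u - s := sub_pos.mpr hsu
  set c := (D + 1) / (f u - s) with hcdef
  have hcpos : 0 < c := div_pos (by linarith) hεpos
  obtain ⟨x, z, hxA, hxK, hzK, hineq⟩ := exists_antipodal_max K ⟨u, hu⟩ hc hns (c • g0)
  have hx := hineq u hu
  have hin : ∀ y, ⟪c • g0, y⟫ = c * f y := fun y => by
    rw [real_inner_smul_left, hg0a]
  rw [hin, hin] at hx
  have hdz : ⟪x - z, x - z⟫ ≤ D := by
    have h1 : dist x z ≤ max Cb 0 := le_trans (hCb hxK hzK) (le_max_left _ _)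
    have h2 : ⟪x - z, x - z⟫ = dist x z ^ 2 := by
      rw [real_inner_self_eq_norm_sq, dist_eq_norm]
    rw [h2, hD]
    exact pow_le_pow_left₀ dist_nonneg h1 2
  have hfx : f x < s := hfs x (subset_closure (subset_convexHull ℝ _ hxA))
  have hce : c * (f u - s) = D + 1 := by
    rw [hcdef]; field_simp
  linarith [mul_lt_mul_of_pos_left hfx hcpos]
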